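/- If a group G is the product G = AB of two abelian subgroups A and B (i.e., every element of G can be written as ab with a ∈ A, b ∈ B), then G is metabelian, i.e., its derived subgroup is abelian. -/

import Mathlib

open scoped commutatorElement

lemma ito_aux_conj {G : Type*} [Group G] (g x y : G) :
    g * ⁅x, y⁆ * g⁻¹ = ⁅g * x * g⁻¹, g * y * g⁻¹⁆ := by
  group

/-- If `z` commutes with `y`, an extra right factor `z` in the first slot disappears. -/
lemma ito_aux1 {G : Type*} [Group G] (x y z : G) (h : z * y = y * z) :
    ⁅x * z, y⁆ = ⁅x, y⁆ := by
  have h' : z * y * z⁻¹ = y := by rw [h, mul_inv_cancel_right]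
  calc ⁅x * z, y⁆ = x * (z * y * z⁻¹) * x⁻¹ * y⁻¹ := by group
    _ = x * y * x⁻¹ * y⁻¹ := by rw [h']
    _ = ⁅x, y⁆ := by group

/-- If `z` commutes with `x`, an extra right factor `z` in the second slot disappears. -/
lemma ito_aux2 {G : Type*} [Group G] (x y z : G) (h : x * z = z * x) :
    ⁅x, y * z⁆ = ⁅x, y⁆ := by
  have h' : z * x⁻¹ * z⁻¹ = x⁻¹ := by
    have hc : Commute x z := h
    rw [hc.symm.inv_right.eq, mul_inv_cancel_right]
  calc ⁅x, y * z⁆ = x * y * (z * x⁻¹ * z⁻¹) * y⁻¹ := by group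
    _ = x * y * x⁻¹ * y⁻¹ := by rw [h']
    _ = ⁅x, y⁆ := by group

/-- Itô's theorem: a product of two abelian subgroups is metabelian. -/
theorem ito_metabelian {G : Type*} [Group G] (A B : Subgroup G)
    (hA : ∀ x ∈ A, ∀ y ∈ A, x * y = y * x)
    (hB : ∀ x ∈ B, ∀ y ∈ B, x * y = y * x)
    (hprod : ∀ g : G, ∃ a ∈ A, ∃ b ∈ B, g = a * b) :
    ∀ x ∈ commutator G, ∀ y ∈ commutator G, x * y = y * x := by
  -- BA decomposition
  have hprod' : ∀ g : G, ∃ b ∈ B, ∃ a ∈ A, g = b * a := by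
    intro g
    obtain ⟨a, ha, b, hb, hg⟩ := hprod g⁻¹
    exact ⟨b⁻¹, inv_mem hb, a⁻¹, inv_mem ha, by rw [← mul_inv_rev, ← hg, inv_inv]⟩
  -- the set of mixed commutators
  set S : Set G := {x | ∃ a ∈ A, ∃ b ∈ B, x = ⁅a, b⁆} with hSdef
  -- conjugation by elements of A preserves S
  have conjA : ∀ a' ∈ A, ∀ a ∈ A, ∀ b ∈ B, ∃ b₁ ∈ B, a' * ⁅a, b⁆ * a'⁻¹ = ⁅a, b₁⁆ := by
    intro a' ha' a ha b hb
    obtain ⟨b₁, hb₁, a₁, ha₁, hdec⟩ := hprod' (a' * b * a'⁻¹)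
    refine ⟨b₁, hb₁, ?_⟩
    rw [ito_aux_conj]
    have h1 : a' * a * a'⁻¹ = a := by
      rw [hA a' ha' a ha, mul_inv_cancel_right]
    rw [h1, hdec, ito_aux2 a b₁ a₁ (hA a ha a₁ ha₁)]
  -- conjugation by elements of B preserves S
  have conjB : ∀ b' ∈ B, ∀ a ∈ A, ∀ b ∈ B, ∃ a₁ ∈ A, b' * ⁅a, b⁆ * b'⁻¹ = ⁅a₁, b⁆ := by
    intro b' hb' a ha b hb
    obtain ⟨a₁, ha₁, b₁, hb₁, hdec⟩ := hprod (b' * a * b'⁻¹)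
    refine ⟨a₁, ha₁, ?_⟩
    rw [ito_aux_conj]
    have h1 : b' * b * b'⁻¹ = b := by
      rw [hB b' hb' b hb, mul_inv_cancel_right]
    rw [h1, hdec, ito_aux1 a₁ b b₁ (hB b₁ hb₁ b hb)]
  -- S is closed under conjugation
  have conjS : ∀ g : G, ∀ s ∈ S, g * s * g⁻¹ ∈ S := by
    intro g s hs
    obtain ⟨a, ha, b, hb, rfl⟩ := hs
    obtain ⟨a', ha', b', hb', rfl⟩ := hprod g
    obtain ⟨a₁, ha₁, h1⟩ := conjB b' hb' a ha b hb
    obtain ⟨b₁, hb₁, h2⟩ := conjA a' ha' a₁ ha₁ b hb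
    have : a' * b' * ⁅a, b⁆ * (a' * b')⁻¹ = a' * (b' * ⁅a, b⁆ * b'⁻¹) * a'⁻¹ := by
      group
    rw [this, h1, h2]
    exact ⟨a₁, ha₁, b₁, hb₁, rfl⟩
  set N : Subgroup G := Subgroup.closure S with hN
  -- N is closed under conjugation
  have conjN : ∀ g : G, ∀ n ∈ N, g * n * g⁻¹ ∈ N := by
    intro g n hn
    induction hn using Subgroup.closure_induction with
    | mem x hx => exact Subgroup.subset_closure (conjS g x hx)
    | one =>
        have : g * 1 * g⁻¹ = 1 := by group
        rw [this]; exact one_mem N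
    | mul x y hx hy px py =>
        have : g * (x * y) * g⁻¹ = (g * x * g⁻¹) * (g * y * g⁻¹) := by group
        rw [this]; exact mul_mem px py
    | inv x hx px =>
        have : g * x⁻¹ * g⁻¹ = (g * x * g⁻¹)⁻¹ := by group
        rw [this]; exact inv_mem px
  -- every commutator lies in N
  have hcomm_le : commutator G ≤ N := by
    rw [commutator_def, Subgroup.commutator_le]
    intro g _ h _
    obtain ⟨a, ha, b, hb, rfl⟩ := hprod g
    obtain ⟨a', ha', b', hb', rfl⟩ := hprod h
    -- ⁅a*b, a'*b'⁆ = a * ⁅b, a'*b'⁆ * a⁻¹ * ⁅a, a'*b'⁆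
    have e1 : ⁅a * b, a' * b'⁆ = (a * ⁅b, a' * b'⁆ * a⁻¹) * ⁅a, a' * b'⁆ := by group
    have e2 : ⁅b, a' * b'⁆ = ⁅b, a'⁆ * (a' * ⁅b, b'⁆ * a'⁻¹) := by group
    have e3 : ⁅a, a' * b'⁆ = ⁅a, a'⁆ * (a' * ⁅a, b'⁆ * a'⁻¹) := by group
    have hbb' : ⁅b, b'⁆ = 1 := by
      rw [commutatorElement_eq_one_iff_mul_comm]; exact hB b hb b' hb'
    have haa' : ⁅a, a'⁆ = 1 := by
      rw [commutatorElement_eq_one_iff_mul_comm]; exact hA a ha a' ha'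
    have m2 : ⁅b, a' * b'⁆ ∈ N := by
      rw [e2, hbb']
      have : ⁅b, a'⁆ * (a' * 1 * a'⁻¹) = ⁅a', b⁆⁻¹ := by group
      rw [this]
      exact inv_mem (Subgroup.subset_closure (show ⁅a', b⁆ ∈ S from ⟨a', ha', b, hb, rfl⟩))
    have m3 : ⁅a, a' * b'⁆ ∈ N := by
      rw [e3, haa', one_mul]
      exact conjN a' _ (Subgroup.subset_closure (show ⁅a, b'⁆ ∈ S from ⟨a, ha, b', hb', rfl⟩))
    rw [e1]
    exact mul_mem (conjN a _ m2) m3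
  -- generators of N commute pairwise
  have hScomm : ∀ s ∈ S, ∀ t ∈ S, Commute s t := by
    rintro s ⟨a, ha, b, hb, rfl⟩ t ⟨a', ha', b', hb', rfl⟩
    -- show ⁅a',b'⁆ * ⁅a,b⁆ * ⁅a',b'⁆⁻¹ = ⁅a,b⁆
    have key : ⁅a', b'⁆ * ⁅a, b⁆ * ⁅a', b'⁆⁻¹ = ⁅a, b⁆ := by
      obtain ⟨a₁, ha₁, b₁, hb₁, hd1⟩ := hprod (b'⁻¹ * a * b')
      obtain ⟨b₂, hb₂, a₂, ha₂, hd2⟩ := hprod' (a'⁻¹ * b * a')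
      -- step (i): conjugate by b'⁻¹
      have s1 : b'⁻¹ * ⁅a, b⁆ * b'⁻¹⁻¹ = ⁅a₁, b⁆ := by
        rw [ito_aux_conj]
        have hbfix : b'⁻¹ * b * b'⁻¹⁻¹ = b := by
          rw [inv_inv, hB b'⁻¹ (inv_mem hb') b hb, inv_mul_cancel_right]
        rw [hbfix]
        rw [show b'⁻¹ * a * b'⁻¹⁻¹ = b'⁻¹ * a * b' by rw [inv_inv], hd1]
        exact ito_aux1 a₁ b b₁ (hB b₁ hb₁ b hb)
      -- step (ii): conjugate by a'⁻¹
      have s2 : a'⁻¹ * ⁅a₁, b⁆ * a'⁻¹⁻¹ = ⁅a₁, b₂⁆ := by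
        rw [ito_aux_conj]
        have hafix : a'⁻¹ * a₁ * a'⁻¹⁻¹ = a₁ := by
          rw [inv_inv, hA a'⁻¹ (inv_mem ha') a₁ ha₁, inv_mul_cancel_right]
        rw [hafix]
        rw [show a'⁻¹ * b * a'⁻¹⁻¹ = a'⁻¹ * b * a' by rw [inv_inv], hd2]
        exact ito_aux2 a₁ b₂ a₂ (hA a₁ ha₁ a₂ ha₂)
      -- step (iii): conjugate by b'
      have s3 : b' * ⁅a₁, b₂⁆ * b'⁻¹ = ⁅a, b₂⁆ := by
        rw [ito_aux_conj]
        have hbfix : b' * b₂ * b'⁻¹ = b₂ := by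
          rw [hB b' hb' b₂ hb₂, mul_inv_cancel_right]
        rw [hbfix]
        have ha₁eq : a₁ = b'⁻¹ * a * b' * b₁⁻¹ := by
          rw [hd1, mul_inv_cancel_right]
        have : b' * a₁ * b'⁻¹ = a * (b' * b₁⁻¹ * b'⁻¹) := by
          rw [ha₁eq]; group
        rw [this, hB b' hb' b₁⁻¹ (inv_mem hb₁), mul_inv_cancel_right]
        exact ito_aux1 a b₂ b₁⁻¹ (hB b₁⁻¹ (inv_mem hb₁) b₂ hb₂)
      -- step (iv): conjugate by a'
      have s4 : a' * ⁅a, b₂⁆ * a'⁻¹ = ⁅a, b⁆ := by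
        rw [ito_aux_conj]
        have hafix : a' * a * a'⁻¹ = a := by
          rw [hA a' ha' a ha, mul_inv_cancel_right]
        rw [hafix]
        have hb₂eq : b₂ = a'⁻¹ * b * a' * a₂⁻¹ := by
          rw [hd2, mul_inv_cancel_right]
        have : a' * b₂ * a'⁻¹ = b * (a' * a₂⁻¹ * a'⁻¹) := by
          rw [hb₂eq]; group
        rw [this, hA a' ha' a₂⁻¹ (inv_mem ha₂), mul_inv_cancel_right]
        exact ito_aux2 a b a₂⁻¹ (hA a ha a₂⁻¹ (inv_mem ha₂))
      calc ⁅a', b'⁆ * ⁅a, b⁆ * ⁅a', b'⁆⁻¹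
          = a' * (b' * (a'⁻¹ * (b'⁻¹ * ⁅a, b⁆ * b'⁻¹⁻¹) * a'⁻¹⁻¹) * b'⁻¹) * a'⁻¹ := by
            group
        _ = ⁅a, b⁆ := by rw [s1, s2, s3, s4]
    rw [mul_inv_eq_iff_eq_mul] at key
    exact key.symm
  -- all elements of N commute pairwise
  have hNcomm : ∀ x ∈ N, ∀ y ∈ N, Commute x y := by
    intro x hx y hy
    induction hx, hy using Subgroup.closure_induction₂ with
    | mem x y hx hy => exact hScomm x hx y hy
    | one_left x hx => exact Commute.one_left x
    | one_right x hx => exact Commute.one_right x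
    | mul_left x y z hx hy hz px py => exact px.mul_left py
    | mul_right y z x hy hz hx px py => exact px.mul_right py
    | inv_left x y hx hy px => exact px.inv_left
    | inv_right x y hx hy px => exact px.inv_right
  intro x hx y hy
  exact hNcomm x (hcomm_le hx) y (hcomm_le hy)
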